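/- Let f : F → {0,1} be a Boolean classifier on a finite product input space F = X_1 × ⋯ × X_n with X_i = {0,1} for all i, and let D be a product (feature-independent) distribution on F. Let S ⊆ {1,…,n}, let i, t ∉ S be distinct, and write Δ_t(T) = v^g_suff(T ∪ {t}) − v^g_suff(T). Then Δ_t(S ∪ {i}) − Δ_t(S) = Σ_{a} 2 · Pr(z_S = a) · P₁ P₀ Q₁ Q₀ · ( g₁₁(a) − g₁₀(a) − g₀₁(a) + g₀₀(a) )² ≥ 0, where the sum ranges over tuples a of values for S with Pr(z_S = a) > 0, P_b = Pr(z_t = b), Q_b = Pr(z_i = b), g_{b'b}(a) = Pr_{z∼D}(f(z) = 1 | z_S = a, z_i = b', z_t = b), and summands for which P₁P₀Q₁Q₀ = 0 are taken to be 0. -/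

import Mathlib

open Finset

open Classical in
/-- Probability of an event over a finite space with mass function `P`. -/
noncomputable def prEvent {F : Type*} [Fintype F] (P : F → ℝ) (A : F → Prop) : ℝ :=
  ∑ z, if A z then P z else 0

open Classical in
/-- Conditional probability `Pr(A | B) = Pr(A ∩ B) / Pr(B)` over a finite space,
with mass function `P`. -/
noncomputable def condPr {F : Type*} [Fintype F] (P : F → ℝ) (A B : F → Prop) : ℝ :=
  (∑ z, if A z ∧ B z then P z else 0) / (∑ z, if B z then P z else 0)

open Classical in
/-- The global sufficient value function on `{0,1}^n`:
`v^g_suff(S) = Σ_{x : P x > 0} P x · Pr_{z∼D}(f z = f x | z_S = x_S)`. -/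
noncomputable def vgSuff {n : ℕ} (f : (Fin n → Bool) → Bool)
    (P : (Fin n → Bool) → ℝ) (S : Finset (Fin n)) : ℝ :=
  ∑ x ∈ Finset.univ.filter (fun x => 0 < P x),
    P x * condPr P (fun z => f z = f x) (fun z => ∀ i ∈ S, z i = x i)

open Classical in
/-- `Pr(z_S = a)`, the probability that the coordinates in `S` take the values
prescribed by the tuple `a : S → {0,1}`. -/
noncomputable def prOn {n : ℕ} (P : (Fin n → Bool) → ℝ)
    (S : Finset (Fin n)) (a : S → Bool) : ℝ :=
  ∑ z : Fin n → Bool, if (∀ i : S, z i = a i) then P z else 0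

/-! ### Auxiliary definitions and lemmas -/

open Classical in
/-- `Pr(π z = a)` for a "projection" map `π`. -/
noncomputable def probW {n : ℕ} {A : Type*} (P : (Fin n → Bool) → ℝ)
    (π : (Fin n → Bool) → A) (a : A) : ℝ :=
  ∑ z, if π z = a then P z else 0

open Classical in
/-- `Pr(f z = 1 ∧ π z = a)` for a "projection" map `π`. -/
noncomputable def probN {n : ℕ} {A : Type*} (f : (Fin n → Bool) → Bool)
    (P : (Fin n → Bool) → ℝ) (π : (Fin n → Bool) → A) (a : A) : ℝ :=
  ∑ z, if f z = true ∧ π z = a then P z else 0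

/-- The key algebraic inequality/identity for the second difference, as a statement
about real numbers. -/
lemma vgAux_key (w q1 q0 r1 r0 ν11 ν10 ν01 ν00 : ℝ)
    (hw : 0 ≤ w) (hq1 : 0 ≤ q1) (hq0 : 0 ≤ q0) (hr1 : 0 ≤ r1) (hr0 : 0 ≤ r0)
    (hq : q1 + q0 = 1) (hr : r1 + r0 = 1)
    (h11 : 0 ≤ ν11) (h11' : ν11 ≤ w * q1 * r1)
    (h10 : 0 ≤ ν10) (h10' : ν10 ≤ w * q1 * r0)
    (h01 : 0 ≤ ν01) (h01' : ν01 ≤ w * q0 * r1)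
    (h00 : 0 ≤ ν00) (h00' : ν00 ≤ w * q0 * r0) :
    (((ν11 ^ 2 + (w * q1 * r1 - ν11) ^ 2) / (w * q1 * r1)
        + (ν10 ^ 2 + (w * q1 * r0 - ν10) ^ 2) / (w * q1 * r0)
        + (ν01 ^ 2 + (w * q0 * r1 - ν01) ^ 2) / (w * q0 * r1)
        + (ν00 ^ 2 + (w * q0 * r0 - ν00) ^ 2) / (w * q0 * r0))
      - (((ν11 + ν10) ^ 2 + (w * q1 - (ν11 + ν10)) ^ 2) / (w * q1)
          + ((ν01 + ν00) ^ 2 + (w * q0 - (ν01 + ν00)) ^ 2) / (w * q0)))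
      - ((((ν11 + ν01) ^ 2 + (w * r1 - (ν11 + ν01)) ^ 2) / (w * r1)
          + ((ν10 + ν00) ^ 2 + (w * r0 - (ν10 + ν00)) ^ 2) / (w * r0))
        - ((ν11 + ν10 + ν01 + ν00) ^ 2
            + (w - (ν11 + ν10 + ν01 + ν00)) ^ 2) / w)
    = 2 * w * r1 * r0 * q1 * q0
        * (ν11 / (w * q1 * r1) - ν10 / (w * q1 * r0)
            - ν01 / (w * q0 * r1) + ν00 / (w * q0 * r0)) ^ 2 := by
  obtain rfl : q0 = 1 - q1 := by linarith
  obtain rfl : r0 = 1 - r1 := by linarith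
  rcases eq_or_lt_of_le hw with hw0 | hw
  · obtain rfl : w = 0 := hw0.symm
    simp at h11' h10' h01' h00'
    have e11 : ν11 = 0 := le_antisymm h11' h11
    have e10 : ν10 = 0 := le_antisymm h10' h10
    have e01 : ν01 = 0 := le_antisymm h01' h01
    have e00 : ν00 = 0 := le_antisymm h00' h00
    simp [e11, e10, e01, e00]
  rcases eq_or_lt_of_le hq1 with hq10 | hq1
  · obtain rfl : q1 = 0 := hq10.symm
    have e11 : ν11 = 0 := le_antisymm (by simpa using h11') h11
    have e10 : ν10 = 0 := le_antisymm (by simpa using h10') h10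
    simp [e11, e10]
  rcases eq_or_lt_of_le hr1 with hr10 | hr1
  · obtain rfl : r1 = 0 := hr10.symm
    have e11 : ν11 = 0 := le_antisymm (by simpa using h11') h11
    have e01 : ν01 = 0 := le_antisymm (by simpa using h01') h01
    simp [e11, e01]
  rcases eq_or_lt_of_le (by linarith : (0:ℝ) ≤ 1 - q1) with hq00 | hq0'
  · have hq1e : q1 = 1 := by linarith
    subst hq1e
    have e01 : ν01 = 0 := le_antisymm (by linarith [h01']) h01
    have e00 : ν00 = 0 := le_antisymm (by linarith [h00']) h00
    norm_num [e01, e00]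
  rcases eq_or_lt_of_le (by linarith : (0:ℝ) ≤ 1 - r1) with hr00 | hr0'
  · have hr1e : r1 = 1 := by linarith
    subst hr1e
    have e10 : ν10 = 0 := le_antisymm (by linarith [h10']) h10
    have e00 : ν00 = 0 := le_antisymm (by linarith [h00']) h00
    norm_num [e10, e00]
  · have hwne := ne_of_gt hw
    have hq1ne := ne_of_gt hq1
    have hr1ne := ne_of_gt hr1
    have hq0ne := ne_of_gt hq0'
    have hr0ne := ne_of_gt hr0'
    field_simp
    ring

open Classical in
/-- The master formula for `vgSuff` in terms of the fibers of a projection `π`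
inducing the equivalence `z_T = x_T`. -/
lemma vgAux_master {n : ℕ} (f : (Fin n → Bool) → Bool) (P : (Fin n → Bool) → ℝ)
    (hP0 : ∀ x, 0 ≤ P x)
    {A : Type*} [Fintype A] (π : (Fin n → Bool) → A) (T : Finset (Fin n))
    (hπ : ∀ z x, (∀ j ∈ T, z j = x j) ↔ π z = π x) :
    vgSuff f P T = ∑ a : A,
      (probN f P π a ^ 2 + (probW P π a - probN f P π a) ^ 2) / probW P π a := by
  set N : A → ℝ := fun a => ∑ z, if f z = true ∧ π z = a then P z else 0 with hN
  set W : A → ℝ := fun a => ∑ z, if π z = a then P z else 0 with hW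
  have hsplit : ∀ a, (∑ z, if f z = false ∧ π z = a then P z else 0) = W a - N a := by
    intro a
    have hpt : ∀ z : Fin n → Bool,
        (if f z = true ∧ π z = a then P z else 0)
          + (if f z = false ∧ π z = a then P z else 0)
        = (if π z = a then P z else 0) := by
      intro z
      by_cases h : π z = a <;> cases hf : f z <;> simp [h, hf]
    have h2 : N a + (∑ z, if f z = false ∧ π z = a then P z else 0) = W a := by
      rw [hN, hW, ← Finset.sum_add_distrib]
      exact Finset.sum_congr rfl fun z _ => hpt z
    linarith
  have step1 : vgSuff f P T = ∑ x, P x *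
      (if f x = true then N (π x) / W (π x) else (W (π x) - N (π x)) / W (π x)) := by
    rw [vgSuff, Finset.sum_filter]
    refine Finset.sum_congr rfl fun x _ => ?_
    by_cases hx : 0 < P x
    · cases hf : f x
      · rw [if_pos hx, if_neg (by simp : ¬(false = true))]
        refine congrArg (P x * ·) ?_
        rw [condPr]
        congr 1
        · refine Eq.trans (Finset.sum_congr rfl fun z _ => ?_) (hsplit (π x))
          by_cases h : f z = false ∧ π z = π x
          · rw [if_pos ⟨h.1, (hπ z x).mpr h.2⟩, if_pos h]
          · rw [if_neg (fun hc => h ⟨hc.1, (hπ z x).mp hc.2⟩), if_neg h]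
        · refine Finset.sum_congr rfl fun z _ => ?_
          by_cases h : π z = π x
          · rw [if_pos ((hπ z x).mpr h), if_pos h]
          · rw [if_neg (fun hc => h ((hπ z x).mp hc)), if_neg h]
      · rw [if_pos hx, if_pos rfl]
        refine congrArg (P x * ·) ?_
        rw [condPr]
        congr 1
        · refine Eq.trans (Finset.sum_congr rfl fun z _ => ?_) rfl
          by_cases h : f z = true ∧ π z = π x
          · rw [if_pos ⟨h.1, (hπ z x).mpr h.2⟩, if_pos h]
          · rw [if_neg (fun hc => h ⟨hc.1, (hπ z x).mp hc.2⟩), if_neg h]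
        · refine Finset.sum_congr rfl fun z _ => ?_
          by_cases h : π z = π x
          · rw [if_pos ((hπ z x).mpr h), if_pos h]
          · rw [if_neg (fun hc => h ((hπ z x).mp hc)), if_neg h]
    · have hx0 : P x = 0 := le_antisymm (not_lt.mp hx) (hP0 x)
      rw [if_neg hx, hx0, zero_mul]
  have step2 : ∀ x : Fin n → Bool, P x *
      (if f x = true then N (π x) / W (π x) else (W (π x) - N (π x)) / W (π x))
      = ∑ a : A, ((if f x = true ∧ π x = a then P x else 0) * (N a / W a)
          + (if f x = false ∧ π x = a then P x else 0) * ((W a - N a) / W a)) := by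
    intro x
    rw [Finset.sum_eq_single (π x)]
    · cases hf : f x <;> simp [hf]
    · intro a _ ha
      simp [Ne.symm ha]
    · simp
  rw [step1]
  rw [Finset.sum_congr rfl fun x _ => step2 x, Finset.sum_comm]
  refine Finset.sum_congr rfl fun a _ => ?_
  rw [Finset.sum_add_distrib, ← Finset.sum_mul, ← Finset.sum_mul]
  rw [hsplit a]
  have hNa : (∑ i : Fin n → Bool, if f i = true ∧ π i = a then P i else 0) = N a := rfl
  rw [hNa]
  show N a * (N a / W a) + (W a - N a) * ((W a - N a) / W a)
    = (N a ^ 2 + (W a - N a) ^ 2) / W a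
  rw [← mul_div_assoc, ← mul_div_assoc, ← add_div]
  ring_nf

open Classical in
lemma vgAux_sigma_one {n : ℕ} (P : (Fin n → Bool) → ℝ) (hP1 : ∑ x, P x = 1)
    (p : Fin n → Bool → ℝ) (hprod : ∀ x, P x = ∏ j, p j (x j)) :
    ∏ j, (p j true + p j false) = 1 := by
  have h : ∏ j, ∑ b, p j b = 1 := by
    rw [Finset.prod_univ_sum, Fintype.piFinset_univ, ← hP1]
    exact Finset.sum_congr rfl fun z _ => (hprod z).symm
  simpa [Fintype.sum_bool] using h

open Classical in
/-- Product formula for the probability of a cylinder event, for a product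
distribution. -/
lemma vgAux_E_eq {n : ℕ} (P : (Fin n → Bool) → ℝ) (hP1 : ∑ x, P x = 1)
    (p : Fin n → Bool → ℝ) (hp0 : ∀ j b, 0 ≤ p j b)
    (hprod : ∀ x, P x = ∏ j, p j (x j))
    (T : Finset (Fin n)) (c : Fin n → Bool) :
    (∑ z : Fin n → Bool, if (∀ j ∈ T, z j = c j) then P z else 0)
      = ∏ j ∈ T, (p j (c j) / (p j true + p j false)) := by
  have hσ1 := vgAux_sigma_one P hP1 p hprod
  have hσpos : ∀ j, 0 < p j true + p j false := by
    intro j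
    rcases lt_or_eq_of_le (add_nonneg (hp0 j true) (hp0 j false)) with h | h
    · exact h
    · exfalso
      have : ∏ j, (p j true + p j false) = 0 :=
        Finset.prod_eq_zero (Finset.mem_univ j) h.symm
      rw [hσ1] at this; norm_num at this
  set g : Fin n → Bool → ℝ :=
    fun j b => if j ∈ T then (if b = c j then p j b else 0) else p j b with hg
  have hpt : ∀ z : Fin n → Bool,
      (if (∀ j ∈ T, z j = c j) then P z else 0) = ∏ j, g j (z j) := by
    intro z
    by_cases h : ∀ j ∈ T, z j = c j
    · rw [if_pos h, hprod]
      refine Finset.prod_congr rfl fun j _ => ?_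
      by_cases hj : j ∈ T
      · simp [hg, hj, h j hj]
      · simp [hg, hj]
    · rw [if_neg h]
      push_neg at h
      obtain ⟨j, hjT, hjne⟩ := h
      exact (Finset.prod_eq_zero (Finset.mem_univ j) (by simp [hg, hjT, hjne])).symm
  have hsum : ∀ j, ∑ b, g j b = if j ∈ T then p j (c j) else (p j true + p j false) := by
    intro j
    by_cases hj : j ∈ T
    · cases hc : c j <;> simp [hg, hj, Fintype.sum_bool, hc]
    · simp [hg, hj, Fintype.sum_bool]
  calc (∑ z : Fin n → Bool, if (∀ j ∈ T, z j = c j) then P z else 0)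
      = ∑ z : Fin n → Bool, ∏ j, g j (z j) := Finset.sum_congr rfl fun z _ => hpt z
    _ = ∏ j, ∑ b, g j b := by
        rw [Finset.prod_univ_sum, Fintype.piFinset_univ]
    _ = ∏ j, (if j ∈ T then p j (c j) else (p j true + p j false)) :=
        Finset.prod_congr rfl fun j _ => hsum j
    _ = (∏ j ∈ T, p j (c j)) * ∏ j ∈ Tᶜ, (p j true + p j false) := by
        rw [← T.prod_mul_prod_compl]
        congr 1
        · exact Finset.prod_congr rfl fun j hj => if_pos hj
        · exact Finset.prod_congr rfl fun j hj => if_neg (Finset.mem_compl.mp hj)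
    _ = ∏ j ∈ T, (p j (c j) / (p j true + p j false)) := by
        rw [Finset.prod_div_distrib]
        have h1 : (∏ j ∈ T, (p j true + p j false)) * ∏ j ∈ Tᶜ, (p j true + p j false) = 1 := by
          rw [T.prod_mul_prod_compl]; exact hσ1
        have h2 : (∏ j ∈ T, (p j true + p j false)) ≠ 0 :=
          ne_of_gt (Finset.prod_pos fun j _ => hσpos j)
        rw [eq_div_iff h2]
        linear_combination (∏ j ∈ T, p j (c j)) * h1

/-- Extension of a partial assignment on `S` by values at `i` and `t`. -/
def vgAux_ext {n : ℕ} (S : Finset (Fin n)) (i t : Fin n) (a : S → Bool)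
    (b' b : Bool) : Fin n → Bool :=
  fun j => if h : j ∈ S then a ⟨j, h⟩ else if j = i then b' else if j = t then b else false

lemma vgAux_ext_mem {n : ℕ} (S : Finset (Fin n)) (i t : Fin n) (a : S → Bool)
    (b' b : Bool) {j : Fin n} (h : j ∈ S) : vgAux_ext S i t a b' b j = a ⟨j, h⟩ :=
  dif_pos h

lemma vgAux_ext_i {n : ℕ} (S : Finset (Fin n)) (i t : Fin n) (a : S → Bool)
    (b' b : Bool) (hi : i ∉ S) : vgAux_ext S i t a b' b i = b' := by
  rw [vgAux_ext, dif_neg hi, if_pos rfl]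

lemma vgAux_ext_t {n : ℕ} (S : Finset (Fin n)) (i t : Fin n) (a : S → Bool)
    (b' b : Bool) (ht : t ∉ S) (hit : i ≠ t) : vgAux_ext S i t a b' b t = b := by
  rw [vgAux_ext, dif_neg ht, if_neg (Ne.symm hit), if_pos rfl]

open Classical in
/-- on `{0,1}^n` with a product distribution, writing
`Δ_t(T) = v^g_suff(T ∪ {t}) − v^g_suff(T)`, for distinct `i, t ∉ S` one has
`Δ_t(S ∪ {i}) − Δ_t(S)
  = Σ_a 2·Pr(z_S = a)·P₁P₀Q₁Q₀·(g₁₁(a) − g₁₀(a) − g₀₁(a) + g₀₀(a))² ≥ 0`,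
where `P_b = Pr(z_t = b)`, `Q_b = Pr(z_i = b)` and
`g_{b'b}(a) = Pr(f z = 1 | z_S = a, z_i = b', z_t = b)`. -/
theorem vgSuff_second_difference {n : ℕ}
    (f : (Fin n → Bool) → Bool) (P : (Fin n → Bool) → ℝ)
    (hP0 : ∀ x, 0 ≤ P x) (hP1 : ∑ x, P x = 1)
    (p : Fin n → Bool → ℝ) (hp0 : ∀ j b, 0 ≤ p j b)
    (hprod : ∀ x, P x = ∏ j, p j (x j))
    (S : Finset (Fin n)) (i t : Fin n)
    (hi : i ∉ S) (ht : t ∉ S) (hit : i ≠ t) :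
    ((vgSuff f P (insert t (insert i S)) - vgSuff f P (insert i S)) -
        (vgSuff f P (insert t S) - vgSuff f P S) =
      ∑ a ∈ Finset.univ.filter (fun a : S → Bool => 0 < prOn P S a),
        2 * prOn P S a
          * prEvent P (fun z => z t = true) * prEvent P (fun z => z t = false)
          * prEvent P (fun z => z i = true) * prEvent P (fun z => z i = false)
          * (condPr P (fun z => f z = true)
                (fun z => (∀ j : S, z j = a j) ∧ z i = true ∧ z t = true)
              - condPr P (fun z => f z = true)
                  (fun z => (∀ j : S, z j = a j) ∧ z i = true ∧ z t = false)
              - condPr P (fun z => f z = true)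
                  (fun z => (∀ j : S, z j = a j) ∧ z i = false ∧ z t = true)
              + condPr P (fun z => f z = true)
                  (fun z => (∀ j : S, z j = a j) ∧ z i = false ∧ z t = false)) ^ 2) ∧
    0 ≤ (vgSuff f P (insert t (insert i S)) - vgSuff f P (insert i S)) -
        (vgSuff f P (insert t S) - vgSuff f P S) := by
  -- basic positivity facts
  have hpE0 : ∀ (u : Fin n) (b : Bool), 0 ≤ prEvent P (fun z => z u = b) := by
    intro u b
    rw [prEvent]
    refine Finset.sum_nonneg fun z _ => ?_
    by_cases h : z u = b
    · rw [if_pos h]; exact hP0 z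
    · rw [if_neg h]
  have hprOn0 : ∀ a : S → Bool, 0 ≤ prOn P S a := by
    intro a
    rw [prOn]
    refine Finset.sum_nonneg fun z _ => ?_
    by_cases h : ∀ j : S, z j = a j
    · rw [if_pos h]; exact hP0 z
    · rw [if_neg h]
  have hsum1 : ∀ u : Fin n,
      prEvent P (fun z => z u = true) + prEvent P (fun z => z u = false) = 1 := by
    intro u
    rw [prEvent, prEvent, ← Finset.sum_add_distrib, ← hP1]
    refine Finset.sum_congr rfl fun z _ => ?_
    cases h : z u <;> simp [h]
  -- the event/projection dictionaries
  have hπ0 : ∀ z x : Fin n → Bool,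
      (∀ j ∈ S, z j = x j) ↔ (fun j : S => z j) = (fun j : S => x j) := by
    intro z x
    constructor
    · intro h; funext j; exact h j j.2
    · intro h j hj; exact congrFun h ⟨j, hj⟩
  have hπ1 : ∀ z x : Fin n → Bool,
      (∀ j ∈ insert i S, z j = x j) ↔
        ((fun j : S => z j), z i) = ((fun j : S => x j), x i) := by
    intro z x
    rw [Prod.mk.injEq]
    constructor
    · intro h
      exact ⟨funext fun j => h j (mem_insert_of_mem j.2), h i (mem_insert_self i S)⟩
    · rintro ⟨h1, h2⟩ j hj
      rcases Finset.mem_insert.mp hj with rfl | hjS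
      · exact h2
      · exact congrFun h1 ⟨j, hjS⟩
  have hπ2 : ∀ z x : Fin n → Bool,
      (∀ j ∈ insert t S, z j = x j) ↔
        ((fun j : S => z j), z t) = ((fun j : S => x j), x t) := by
    intro z x
    rw [Prod.mk.injEq]
    constructor
    · intro h
      exact ⟨funext fun j => h j (mem_insert_of_mem j.2), h t (mem_insert_self t S)⟩
    · rintro ⟨h1, h2⟩ j hj
      rcases Finset.mem_insert.mp hj with rfl | hjS
      · exact h2
      · exact congrFun h1 ⟨j, hjS⟩
  have hπ3 : ∀ z x : Fin n → Bool,
      (∀ j ∈ insert t (insert i S), z j = x j) ↔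
        ((fun j : S => z j), z i, z t) = ((fun j : S => x j), x i, x t) := by
    intro z x
    rw [Prod.mk.injEq, Prod.mk.injEq]
    constructor
    · intro h
      exact ⟨funext fun j => h j (mem_insert_of_mem (mem_insert_of_mem j.2)),
        h i (mem_insert_of_mem (mem_insert_self i S)), h t (mem_insert_self t _)⟩
    · rintro ⟨h1, h2, h3⟩ j hj
      rcases Finset.mem_insert.mp hj with rfl | hj'
      · exact h3
      rcases Finset.mem_insert.mp hj' with rfl | hjS
      · exact h2
      · exact congrFun h1 ⟨j, hjS⟩
  -- identification of `probW` for the base projection with `prOn`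
  have hprOnW : ∀ a : S → Bool, probW P (fun z => (fun j : S => z j)) a = prOn P S a := by
    intro a
    rw [probW, prOn]
    refine Finset.sum_congr rfl fun z _ => ?_
    by_cases h : (fun j : S => z j) = a
    · rw [if_pos h, if_pos (fun j => congrFun h j)]
    · rw [if_neg h, if_neg (fun hc => h (funext fun j => hc j))]
  -- single-coordinate events
  have hQ : ∀ (u : Fin n) (b : Bool),
      prEvent P (fun z => z u = b) = p u b / (p u true + p u false) := by
    intro u b
    rw [prEvent]
    refine Eq.trans (Finset.sum_congr rfl fun z _ => ?_)
      (Eq.trans (vgAux_E_eq P hP1 p hp0 hprod {u} (fun _ => b)) (Finset.prod_singleton ..))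
    by_cases h : z u = b
    · rw [if_pos h, if_pos (fun j hj => by rw [Finset.mem_singleton] at hj; rw [hj]; exact h)]
    · rw [if_neg h, if_neg (fun hc => h (hc u (Finset.mem_singleton_self u)))]
  -- `prOn` as a product
  have hprOnE : ∀ (a : S → Bool) (b' b : Bool),
      prOn P S a = ∏ j ∈ S, (p j (vgAux_ext S i t a b' b j) / (p j true + p j false)) := by
    intro a b' b
    rw [prOn]
    refine Eq.trans (Finset.sum_congr rfl fun z _ => ?_)
      (vgAux_E_eq P hP1 p hp0 hprod S (vgAux_ext S i t a b' b))
    by_cases h : ∀ j : S, z j = a j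
    · rw [if_pos h, if_pos (fun j hj => by rw [vgAux_ext_mem S i t a b' b hj]; exact h ⟨j, hj⟩)]
    · rw [if_neg h,
        if_neg (fun hc => h (fun j => by rw [hc j.1 j.2, vgAux_ext_mem S i t a b' b j.2]))]
  have hprodSindep : ∀ (a : S → Bool) (b' b b'' b2 : Bool),
      (∏ j ∈ S, (p j (vgAux_ext S i t a b' b j) / (p j true + p j false)))
        = ∏ j ∈ S, (p j (vgAux_ext S i t a b'' b2 j) / (p j true + p j false)) := by
    intro a b' b b'' b2
    refine Finset.prod_congr rfl fun j hj => ?_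
    rw [vgAux_ext_mem S i t a b' b hj, vgAux_ext_mem S i t a b'' b2 hj]
  -- bridges between tuple equalities and cylinder conditions
  have hB3 : ∀ (z : Fin n → Bool) (a : S → Bool) (b' b : Bool),
      ((fun j : S => z j), z i, z t) = (a, b', b) ↔
        (∀ j ∈ insert t (insert i S), z j = vgAux_ext S i t a b' b j) := by
    intro z a b' b
    rw [Prod.mk.injEq, Prod.mk.injEq]
    constructor
    · rintro ⟨h1, h2, h3⟩ j hj
      rcases Finset.mem_insert.mp hj with hjt | hj'
      · rw [hjt, vgAux_ext_t S i t a b' b ht hit]; exact h3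
      rcases Finset.mem_insert.mp hj' with hji | hjS
      · rw [hji, vgAux_ext_i S i t a b' b hi]; exact h2
      · rw [vgAux_ext_mem S i t a b' b hjS]; exact congrFun h1 ⟨j, hjS⟩
    · intro h
      refine ⟨funext fun j => ?_, ?_, ?_⟩
      · have := h j.1 (mem_insert_of_mem (mem_insert_of_mem j.2))
        rwa [vgAux_ext_mem S i t a b' b j.2] at this
      · have := h i (mem_insert_of_mem (mem_insert_self i S))
        rwa [vgAux_ext_i S i t a b' b hi] at this
      · have := h t (mem_insert_self t _)
        rwa [vgAux_ext_t S i t a b' b ht hit] at this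
  have hB1 : ∀ (z : Fin n → Bool) (a : S → Bool) (b' b : Bool),
      ((fun j : S => z j), z i) = (a, b') ↔
        (∀ j ∈ insert i S, z j = vgAux_ext S i t a b' b j) := by
    intro z a b' b
    rw [Prod.mk.injEq]
    constructor
    · rintro ⟨h1, h2⟩ j hj
      rcases Finset.mem_insert.mp hj with hji | hjS
      · rw [hji, vgAux_ext_i S i t a b' b hi]; exact h2
      · rw [vgAux_ext_mem S i t a b' b hjS]; exact congrFun h1 ⟨j, hjS⟩
    · intro h
      refine ⟨funext fun j => ?_, ?_⟩
      · have := h j.1 (mem_insert_of_mem j.2)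
        rwa [vgAux_ext_mem S i t a b' b j.2] at this
      · have := h i (mem_insert_self i S)
        rwa [vgAux_ext_i S i t a b' b hi] at this
  have hB2 : ∀ (z : Fin n → Bool) (a : S → Bool) (b' b : Bool),
      ((fun j : S => z j), z t) = (a, b) ↔
        (∀ j ∈ insert t S, z j = vgAux_ext S i t a b' b j) := by
    intro z a b' b
    rw [Prod.mk.injEq]
    constructor
    · rintro ⟨h1, h2⟩ j hj
      rcases Finset.mem_insert.mp hj with hjt | hjS
      · rw [hjt, vgAux_ext_t S i t a b' b ht hit]; exact h2
      · rw [vgAux_ext_mem S i t a b' b hjS]; exact congrFun h1 ⟨j, hjS⟩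
    · intro h
      refine ⟨funext fun j => ?_, ?_⟩
      · have := h j.1 (mem_insert_of_mem j.2)
        rwa [vgAux_ext_mem S i t a b' b j.2] at this
      · have := h t (mem_insert_self t S)
        rwa [vgAux_ext_t S i t a b' b ht hit] at this
  -- factorizations of the joint cylinder probabilities
  have htiS : t ∉ insert i S := by
    simp [Finset.mem_insert, Ne.symm hit, ht]
  have hW3 : ∀ (a : S → Bool) (b' b : Bool),
      probW P (fun z => ((fun j : S => z j), z i, z t)) (a, b', b)
        = prOn P S a * prEvent P (fun z => z i = b') * prEvent P (fun z => z t = b) := by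
    intro a b' b
    rw [probW]
    refine Eq.trans (Eq.trans (Finset.sum_congr rfl fun z _ => ?_)
      (vgAux_E_eq P hP1 p hp0 hprod (insert t (insert i S)) (vgAux_ext S i t a b' b))) ?_
    · by_cases h : ((fun j : S => z j), z i, z t) = (a, b', b)
      · rw [if_pos h, if_pos ((hB3 z a b' b).mp h)]
      · rw [if_neg h, if_neg (fun hc => h ((hB3 z a b' b).mpr hc))]
    · rw [Finset.prod_insert htiS, Finset.prod_insert hi,
        vgAux_ext_t S i t a b' b ht hit, vgAux_ext_i S i t a b' b hi,
        ← hprOnE a b' b, hQ i b', hQ t b]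
      ring
  have hW1 : ∀ (a : S → Bool) (b' : Bool),
      probW P (fun z => ((fun j : S => z j), z i)) (a, b')
        = prOn P S a * prEvent P (fun z => z i = b') := by
    intro a b'
    rw [probW]
    refine Eq.trans (Eq.trans (Finset.sum_congr rfl fun z _ => ?_)
      (vgAux_E_eq P hP1 p hp0 hprod (insert i S) (vgAux_ext S i t a b' false))) ?_
    · by_cases h : ((fun j : S => z j), z i) = (a, b')
      · rw [if_pos h, if_pos ((hB1 z a b' false).mp h)]
      · rw [if_neg h, if_neg (fun hc => h ((hB1 z a b' false).mpr hc))]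
    · rw [Finset.prod_insert hi, vgAux_ext_i S i t a b' false hi,
        ← hprOnE a b' false, hQ i b']
      ring
  have hW2 : ∀ (a : S → Bool) (b : Bool),
      probW P (fun z => ((fun j : S => z j), z t)) (a, b)
        = prOn P S a * prEvent P (fun z => z t = b) := by
    intro a b
    rw [probW]
    refine Eq.trans (Eq.trans (Finset.sum_congr rfl fun z _ => ?_)
      (vgAux_E_eq P hP1 p hp0 hprod (insert t S) (vgAux_ext S i t a false b))) ?_
    · by_cases h : ((fun j : S => z j), z t) = (a, b)
      · rw [if_pos h, if_pos ((hB2 z a false b).mp h)]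
      · rw [if_neg h, if_neg (fun hc => h ((hB2 z a false b).mpr hc))]
    · rw [Finset.prod_insert ht, vgAux_ext_t S i t a false b ht hit,
        ← hprOnE a false b, hQ t b]
      ring
  -- splitting of the numerators
  have hN1 : ∀ (a : S → Bool) (b' : Bool),
      probN f P (fun z => ((fun j : S => z j), z i)) (a, b')
        = probN f P (fun z => ((fun j : S => z j), z i, z t)) (a, b', true)
          + probN f P (fun z => ((fun j : S => z j), z i, z t)) (a, b', false) := by
    intro a b'
    rw [probN, probN, probN, ← Finset.sum_add_distrib]
    refine Finset.sum_congr rfl fun z _ => ?_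
    by_cases hf : f z = true <;> by_cases h1 : (fun j : S => z j) = a <;>
      by_cases h2 : z i = b' <;> cases hzt : z t <;>
      simp [Prod.mk.injEq, hf, h1, h2, hzt]
  have hN2 : ∀ (a : S → Bool) (b : Bool),
      probN f P (fun z => ((fun j : S => z j), z t)) (a, b)
        = probN f P (fun z => ((fun j : S => z j), z i, z t)) (a, true, b)
          + probN f P (fun z => ((fun j : S => z j), z i, z t)) (a, false, b) := by
    intro a b
    rw [probN, probN, probN, ← Finset.sum_add_distrib]
    refine Finset.sum_congr rfl fun z _ => ?_
    by_cases hf : f z = true <;> by_cases h1 : (fun j : S => z j) = a <;>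
      by_cases h2 : z t = b <;> cases hzi : z i <;>
      simp [Prod.mk.injEq, hf, h1, h2, hzi]
  have hN0 : ∀ a : S → Bool,
      probN f P (fun z => (fun j : S => z j)) a
        = probN f P (fun z => ((fun j : S => z j), z i, z t)) (a, true, true)
          + probN f P (fun z => ((fun j : S => z j), z i, z t)) (a, true, false)
          + probN f P (fun z => ((fun j : S => z j), z i, z t)) (a, false, true)
          + probN f P (fun z => ((fun j : S => z j), z i, z t)) (a, false, false) := by
    intro a
    rw [probN, probN, probN, probN, probN, ← Finset.sum_add_distrib,
      ← Finset.sum_add_distrib, ← Finset.sum_add_distrib]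
    refine Finset.sum_congr rfl fun z _ => ?_
    by_cases hf : f z = true <;> by_cases h1 : (fun j : S => z j) = a <;>
      cases hzi : z i <;> cases hzt : z t <;>
      simp [Prod.mk.injEq, hf, h1, hzi, hzt]
  -- bounds on the numerators
  have hN3nonneg : ∀ (a : S → Bool) (b' b : Bool),
      0 ≤ probN f P (fun z => ((fun j : S => z j), z i, z t)) (a, b', b) := by
    intro a b' b
    rw [probN]
    refine Finset.sum_nonneg fun z _ => ?_
    by_cases h : f z = true ∧ ((fun j : S => z j), z i, z t) = (a, b', b)
    · rw [if_pos h]; exact hP0 z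
    · rw [if_neg h]
  have hN3le : ∀ (a : S → Bool) (b' b : Bool),
      probN f P (fun z => ((fun j : S => z j), z i, z t)) (a, b', b)
        ≤ prOn P S a * prEvent P (fun z => z i = b') * prEvent P (fun z => z t = b) := by
    intro a b' b
    rw [← hW3 a b' b, probN, probW]
    refine Finset.sum_le_sum fun z _ => ?_
    by_cases h : ((fun j : S => z j), z i, z t) = (a, b', b)
    · rw [if_pos h]
      by_cases hf : f z = true
      · rw [if_pos ⟨hf, h⟩]
      · rw [if_neg (fun hc => hf hc.1)]; exact hP0 z
    · rw [if_neg h, if_neg (fun hc => h hc.2)]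
  -- conditional probabilities in terms of the numerators
  have hCond : ∀ (a : S → Bool) (b' b : Bool),
      condPr P (fun z => f z = true)
          (fun z => (∀ j : S, z j = a j) ∧ z i = b' ∧ z t = b)
        = probN f P (fun z => ((fun j : S => z j), z i, z t)) (a, b', b)
          / (prOn P S a * prEvent P (fun z => z i = b') * prEvent P (fun z => z t = b)) := by
    intro a b' b
    have hiff : ∀ z : Fin n → Bool,
        ((∀ j : S, z j = a j) ∧ z i = b' ∧ z t = b) ↔
          ((fun j : S => z j), z i, z t) = (a, b', b) := by
      intro z
      rw [Prod.mk.injEq, Prod.mk.injEq, funext_iff]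
    rw [condPr]
    refine congrArg₂ (· / ·) ?_ ?_
    · refine Eq.trans (Finset.sum_congr rfl fun z _ => ?_) rfl
      by_cases h : f z = true ∧ ((fun j : S => z j), z i, z t) = (a, b', b)
      · rw [if_pos ⟨h.1, (hiff z).mpr h.2⟩, if_pos h]
      · rw [if_neg (fun hc => h ⟨hc.1, (hiff z).mp hc.2⟩), if_neg h]
    · refine Eq.trans (Eq.trans (Finset.sum_congr rfl fun z _ => ?_) rfl) (hW3 a b' b)
      by_cases h : ((fun j : S => z j), z i, z t) = (a, b', b)
      · rw [if_pos ((hiff z).mpr h), if_pos h]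
      · rw [if_neg (fun hc => h ((hiff z).mp hc)), if_neg h]
  -- main computation
  have hmain : (vgSuff f P (insert t (insert i S)) - vgSuff f P (insert i S)) -
      (vgSuff f P (insert t S) - vgSuff f P S) =
      ∑ a ∈ Finset.univ.filter (fun a : S → Bool => 0 < prOn P S a),
        2 * prOn P S a
          * prEvent P (fun z => z t = true) * prEvent P (fun z => z t = false)
          * prEvent P (fun z => z i = true) * prEvent P (fun z => z i = false)
          * (condPr P (fun z => f z = true)
                (fun z => (∀ j : S, z j = a j) ∧ z i = true ∧ z t = true)
              - condPr P (fun z => f z = true)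
                  (fun z => (∀ j : S, z j = a j) ∧ z i = true ∧ z t = false)
              - condPr P (fun z => f z = true)
                  (fun z => (∀ j : S, z j = a j) ∧ z i = false ∧ z t = true)
              + condPr P (fun z => f z = true)
                  (fun z => (∀ j : S, z j = a j) ∧ z i = false ∧ z t = false)) ^ 2 := by
    rw [vgAux_master f P hP0 (fun z => ((fun j : S => z j), z i, z t))
        (insert t (insert i S)) hπ3,
      vgAux_master f P hP0 (fun z => ((fun j : S => z j), z i)) (insert i S) hπ1,
      vgAux_master f P hP0 (fun z => ((fun j : S => z j), z t)) (insert t S) hπ2,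
      vgAux_master f P hP0 (fun z => (fun j : S => z j)) S hπ0]
    simp only [Fintype.sum_prod_type]
    rw [← Finset.sum_sub_distrib, ← Finset.sum_sub_distrib, ← Finset.sum_sub_distrib,
      Finset.sum_filter]
    refine Finset.sum_congr rfl fun a _ => ?_
    simp only [Fintype.sum_bool]
    simp only [hW3, hW1, hW2, hprOnW, hN1, hN2, hN0]
    have hkey := vgAux_key (prOn P S a)
      (prEvent P (fun z => z i = true)) (prEvent P (fun z => z i = false))
      (prEvent P (fun z => z t = true)) (prEvent P (fun z => z t = false))
      (probN f P (fun z => ((fun j : S => z j), z i, z t)) (a, true, true))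
      (probN f P (fun z => ((fun j : S => z j), z i, z t)) (a, true, false))
      (probN f P (fun z => ((fun j : S => z j), z i, z t)) (a, false, true))
      (probN f P (fun z => ((fun j : S => z j), z i, z t)) (a, false, false))
      (hprOn0 a) (hpE0 i true) (hpE0 i false) (hpE0 t true) (hpE0 t false)
      (hsum1 i) (hsum1 t)
      (hN3nonneg a true true) (hN3le a true true)
      (hN3nonneg a true false) (hN3le a true false)
      (hN3nonneg a false true) (hN3le a false true)
      (hN3nonneg a false false) (hN3le a false false)
    by_cases hpos : 0 < prOn P S a
    · rw [if_pos hpos]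
      simp only [hCond]
      linear_combination hkey
    · rw [if_neg hpos]
      have hz : prOn P S a = 0 := le_antisymm (not_lt.mp hpos) (hprOn0 a)
      rw [hz] at hkey ⊢
      linear_combination hkey
  refine ⟨hmain, ?_⟩
  rw [hmain]
  refine Finset.sum_nonneg fun a _ => ?_
  have h2 : (0:ℝ) ≤ 2 * prOn P S a := mul_nonneg (by norm_num) (hprOn0 a)
  exact mul_nonneg (mul_nonneg (mul_nonneg (mul_nonneg (mul_nonneg h2
    (hpE0 t true)) (hpE0 t false)) (hpE0 i true)) (hpE0 i false)) (sq_nonneg _)
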